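/- arXiv:2307.12055 — 2 statements merged into one kernel-verified Lean document; each statement's English description precedes it below -/
import Mathlib

section
/- Let (X, μ) be a measure space and let α : X → ℝ be measurable with 0 < α_min ≤ α(x) ≤ α_max for μ-a.e. x. Let N : L²(μ; ℝ) → L²(μ; ℝ) be a continuous linear operator with ⟨N v, v⟩ ≥ c₀ ‖v‖² for all v ∈ L², where c₀ > 0. Then for every g ∈ L²(μ; ℝ) there exists a unique u ∈ L²(μ; ℝ) satisfying u + N(α·u) = g, and it obeys ‖u‖ ≤ (α_max / (α_min (1 + c₀ α_min))) ‖g‖. -/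
open MeasureTheory
open scoped InnerProductSpace ENNReal

noncomputable section Stmt4Aux

variable {X : Type*} [MeasurableSpace X] {μ : Measure X}

lemma stmt4_memLp_mul (β : X → ℝ) (hβ : Measurable β) (C : ℝ)
    (hC : ∀ᵐ x ∂μ, |β x| ≤ C) (u : Lp ℝ 2 μ) :
    MemLp (fun x => β x * u x) 2 μ :=
  (Lp.memLp u).of_le_mul (hβ.aestronglyMeasurable.mul (Lp.aestronglyMeasurable u))
    (hC.mono fun x hx => by
      simp only [norm_mul, Real.norm_eq_abs]
      exact mul_le_mul_of_nonneg_right hx (abs_nonneg _))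

/-- Multiplication by a bounded measurable function as a continuous linear map on L². -/
def stmt4_mulCLM (β : X → ℝ) (hβ : Measurable β) (C : ℝ) (hC0 : 0 ≤ C)
    (hC : ∀ᵐ x ∂μ, |β x| ≤ C) : Lp ℝ 2 μ →L[ℝ] Lp ℝ 2 μ :=
  LinearMap.mkContinuous
    { toFun := fun u => (stmt4_memLp_mul β hβ C hC u).toLp _
      map_add' := fun u v => Lp.ext <| by
        filter_upwards [(stmt4_memLp_mul β hβ C hC (u + v)).coeFn_toLp,
          (stmt4_memLp_mul β hβ C hC u).coeFn_toLp,
          (stmt4_memLp_mul β hβ C hC v).coeFn_toLp, Lp.coeFn_add u v,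
          Lp.coeFn_add ((stmt4_memLp_mul β hβ C hC u).toLp _)
            ((stmt4_memLp_mul β hβ C hC v).toLp _)] with x h1 h2 h3 h4 h5
        rw [h1, h5, Pi.add_apply, h2, h3, h4, Pi.add_apply]
        ring
      map_smul' := fun c u => Lp.ext <| by
        filter_upwards [(stmt4_memLp_mul β hβ C hC (c • u)).coeFn_toLp,
          (stmt4_memLp_mul β hβ C hC u).coeFn_toLp, Lp.coeFn_smul c u,
          Lp.coeFn_smul c ((stmt4_memLp_mul β hβ C hC u).toLp _)] with x h1 h2 h3 h4
        rw [h1, RingHom.id_apply, h4, Pi.smul_apply, h2, h3, Pi.smul_apply,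
          smul_eq_mul, smul_eq_mul]
        ring }
    C
    (fun u => by
      simp only [LinearMap.coe_mk, AddHom.coe_mk]
      rw [Lp.norm_toLp, Lp.norm_def]
      have h1 : eLpNorm (fun x => β x * u x) 2 μ ≤ eLpNorm (C • ⇑u) 2 μ := by
        refine eLpNorm_mono_ae ?_
        filter_upwards [hC] with x hx
        simp only [Pi.smul_apply, smul_eq_mul, norm_mul, Real.norm_eq_abs]
        exact mul_le_mul_of_nonneg_right (hx.trans (le_abs_self C)) (abs_nonneg _)
      have h2 : eLpNorm (C • ⇑u) 2 μ = ‖C‖₊ • eLpNorm (⇑u) 2 μ :=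
        eLpNorm_const_smul C (⇑u) 2 μ
      have h2' : eLpNorm (C • ⇑u) 2 μ = (‖C‖₊ : ℝ≥0∞) * eLpNorm (⇑u) 2 μ := by
        rw [h2, ENNReal.smul_def, smul_eq_mul]
      calc (eLpNorm (fun x => β x * u x) 2 μ).toReal
          ≤ ((‖C‖₊ : ℝ≥0∞) * eLpNorm (⇑u) 2 μ).toReal :=
            ENNReal.toReal_mono
              (ENNReal.mul_ne_top ENNReal.coe_ne_top (Lp.eLpNorm_ne_top u))
              (h1.trans_eq h2')
        _ = C * (eLpNorm (⇑u) 2 μ).toReal := by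
            rw [ENNReal.toReal_mul, ENNReal.coe_toReal, coe_nnnorm, Real.norm_eq_abs,
              abs_of_nonneg hC0])

lemma stmt4_mulCLM_coeFn (β : X → ℝ) (hβ : Measurable β) (C : ℝ) (hC0 : 0 ≤ C)
    (hC : ∀ᵐ x ∂μ, |β x| ≤ C) (u : Lp ℝ 2 μ) :
    ⇑(stmt4_mulCLM β hβ C hC0 hC u) =ᵐ[μ] fun x => β x * u x := by
  have : stmt4_mulCLM β hβ C hC0 hC u = (stmt4_memLp_mul β hβ C hC u).toLp _ := rfl
  rw [this]
  exact MemLp.coeFn_toLp _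

lemma stmt4_mulCLM_norm_le (β : X → ℝ) (hβ : Measurable β) (C : ℝ) (hC0 : 0 ≤ C)
    (hC : ∀ᵐ x ∂μ, |β x| ≤ C) (u : Lp ℝ 2 μ) :
    ‖stmt4_mulCLM β hβ C hC0 hC u‖ ≤ C * ‖u‖ :=
  ContinuousLinearMap.le_of_opNorm_le _ (LinearMap.mkContinuous_norm_le _ hC0 _) u

lemma stmt4_inner_eq (f g : Lp ℝ 2 μ) : ⟪f, g⟫_ℝ = ∫ x, f x * g x ∂μ := by
  rw [L2.inner_def]
  simp [RCLike.inner_apply, conj_trivial]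
  exact integral_congr_ae (Filter.Eventually.of_forall fun x => mul_comm _ _)

/-- Operator version of the Lax–Milgram theorem: a coercive operator is bijective. -/
lemma stmt4_bijective_of_coercive {V : Type*} [NormedAddCommGroup V]
    [InnerProductSpace ℝ V] [CompleteSpace V] (A : V →L[ℝ] V) (c : ℝ) (hc : 0 < c)
    (h : ∀ v, c * ‖v‖ ^ 2 ≤ ⟪A v, v⟫_ℝ) : Function.Bijective A := by
  have below : ∀ v, c * ‖v‖ ≤ ‖A v‖ := by
    intro v
    by_cases hv : 0 < ‖v‖
    · refine (mul_le_mul_iff_of_pos_right hv).mp ?_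
      calc c * ‖v‖ * ‖v‖ = c * ‖v‖ ^ 2 := by ring
        _ ≤ ⟪A v, v⟫_ℝ := h v
        _ ≤ ‖A v‖ * ‖v‖ := real_inner_le_norm (A v) v
    · have : v = 0 := by simpa using hv
      simp [this]
  have anti : AntilipschitzWith c⁻¹.toNNReal A := by
    refine ContinuousLinearMap.antilipschitz_of_bound A ?_
    intro x
    rw [Real.coe_toNNReal', max_eq_left_of_lt (inv_pos.mpr hc), ←
      inv_mul_le_iff₀ (inv_pos.mpr hc)]
    simpa using below x
  constructor
  · exact anti.injective
  · have hclosed : IsClosed ((LinearMap.range (A : V →ₗ[ℝ] V) : Submodule ℝ V) : Set V) := by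
      have := anti.isClosed_range A.uniformContinuous
      simpa [LinearMap.coe_range] using this
    haveI := hclosed.completeSpace_coe
    have hrange : LinearMap.range (A : V →ₗ[ℝ] V) = ⊤ := by
      rw [← (LinearMap.range (A : V →ₗ[ℝ] V)).orthogonal_orthogonal, Submodule.eq_top_iff']
      intro v w mem_w_orthogonal
      obtain rfl : w = 0 := by
        rw [← norm_eq_zero, ← mul_self_eq_zero, ← mul_right_inj' hc.ne', mul_zero, ←
          mul_assoc]
        apply le_antisymm
        · calc c * ‖w‖ * ‖w‖ = c * ‖w‖ ^ 2 := by ring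
            _ ≤ ⟪A w, w⟫_ℝ := h w
            _ = 0 := mem_w_orthogonal _ ⟨w, rfl⟩
        · positivity
      exact inner_zero_left _
    exact LinearMap.range_eq_top.mp hrange

lemma stmt4_final_bound (αmin αmax c₀ nu nw ng : ℝ)
    (hαmin : 0 < αmin) (hc₀ : 0 < c₀) (hαle : αmin ≤ αmax)
    (hupos : 0 < nu) (hbound : αmin * nu ^ 2 ≤ nu * nw)
    (h6 : nw ≤ αmax * nu)
    (hgw : αmin * nu ^ 2 + c₀ * nw ^ 2 ≤ ng * nw) :
    nu * (αmin * (1 + c₀ * αmin)) ≤ αmax * ng := by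
  have hαmax : 0 < αmax := lt_of_lt_of_le hαmin hαle
  have hwge : αmin * nu ≤ nw := by nlinarith
  have hwpos : 0 < nw := lt_of_lt_of_le (by positivity) hwge
  have hint1 : αmin * nu * nw ≤ αmin * nu * (αmax * nu) :=
    mul_le_mul_of_nonneg_left h6 (mul_nonneg hαmin.le hupos.le)
  have hint2 : c₀ * nw * (αmin * nu) ≤ c₀ * nw * nw :=
    mul_le_mul_of_nonneg_left hwge (by positivity)
  have hint3 : αmax * (αmin * nu ^ 2 + c₀ * nw ^ 2) ≤ αmax * (ng * nw) :=
    mul_le_mul_of_nonneg_left hgw hαmax.le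
  have hmain : αmin * (1 + c₀ * αmax) * nu ≤ αmax * ng := by
    nlinarith [hint1, hint2, hint3, hwpos, hupos]
  have hmono : c₀ * αmin * nu ≤ c₀ * αmax * nu :=
    mul_le_mul_of_nonneg_right (mul_le_mul_of_nonneg_left hαle hc₀.le) hupos.le
  nlinarith [hmain, hmono]

end Stmt4Aux
/-- Unique solvability (with quantitative bound) of the integral equation
u + N(α u) = g in L², established in Subsection 5.1 of the paper via Lax–Milgram. -/
theorem stmt_4 {X : Type*} [MeasurableSpace X] (μ : Measure X)
    (α : X → ℝ) (hαmeas : Measurable α)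
    (αmin αmax : ℝ) (hαmin : 0 < αmin)
    (hbdd : ∀ᵐ x ∂μ, αmin ≤ α x ∧ α x ≤ αmax)
    (N : Lp ℝ 2 μ →L[ℝ] Lp ℝ 2 μ) (c₀ : ℝ) (hc₀ : 0 < c₀)
    (hN : ∀ v : Lp ℝ 2 μ, c₀ * ‖v‖ ^ 2 ≤ ⟪N v, v⟫_ℝ)
    (M : Lp ℝ 2 μ → Lp ℝ 2 μ)
    (hM : ∀ u : Lp ℝ 2 μ, ⇑(M u) =ᵐ[μ] fun x => α x * u x)
    (g : Lp ℝ 2 μ) :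
    (∃! u : Lp ℝ 2 μ, u + N (M u) = g) ∧
    ∀ u : Lp ℝ 2 μ, u + N (M u) = g →
      ‖u‖ ≤ (αmax / (αmin * (1 + c₀ * αmin))) * ‖g‖ := by
  classical
  set C := max αmax 0 with hCdef
  have hC0 : (0:ℝ) ≤ C := le_max_right _ _
  have hα_abs : ∀ᵐ x ∂μ, |α x| ≤ C := by
    filter_upwards [hbdd] with x hx
    rw [abs_of_nonneg (le_trans hαmin.le hx.1)]
    exact hx.2.trans (le_max_left _ _)
  have hαinv0 : (0:ℝ) ≤ αmin⁻¹ := inv_nonneg.mpr hαmin.le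
  have hαinv_abs : ∀ᵐ x ∂μ, |(α x)⁻¹| ≤ αmin⁻¹ := by
    filter_upwards [hbdd] with x hx
    have hxpos : 0 < α x := lt_of_lt_of_le hαmin hx.1
    rw [abs_of_nonneg (inv_nonneg.mpr hxpos.le)]
    exact inv_anti₀ hαmin hx.1
  set Mα := stmt4_mulCLM α hαmeas C hC0 hα_abs with hMαdef
  set Minv := stmt4_mulCLM (fun x => (α x)⁻¹) hαmeas.inv αmin⁻¹ hαinv0 hαinv_abs
    with hMinvdef
  have hMeq : ∀ u, M u = Mα u := fun u =>
    Lp.ext ((hM u).trans (stmt4_mulCLM_coeFn α hαmeas C hC0 hα_abs u).symm)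
  have hMinvMα : ∀ u, Minv (Mα u) = u := by
    intro u
    apply Lp.ext
    filter_upwards [stmt4_mulCLM_coeFn (fun x => (α x)⁻¹) hαmeas.inv _ hαinv0 hαinv_abs (Mα u),
      stmt4_mulCLM_coeFn α hαmeas C hC0 hα_abs u, hbdd] with x h1 h2 h3
    rw [h1, h2]
    have hne : α x ≠ 0 := ne_of_gt (lt_of_lt_of_le hαmin h3.1)
    field_simp
  have hMαMinv : ∀ w, Mα (Minv w) = w := by
    intro w
    apply Lp.ext
    filter_upwards [stmt4_mulCLM_coeFn α hαmeas C hC0 hα_abs (Minv w),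
      stmt4_mulCLM_coeFn (fun x => (α x)⁻¹) hαmeas.inv _ hαinv0 hαinv_abs w, hbdd] with x h1 h2 h3
    rw [h1, h2]
    have hne : α x ≠ 0 := ne_of_gt (lt_of_lt_of_le hαmin h3.1)
    field_simp
  have key1 : ∀ u : Lp ℝ 2 μ, αmin * ‖u‖ ^ 2 ≤ ⟪u, Mα u⟫_ℝ := by
    intro u
    have hcoe : ⇑(Mα u) =ᵐ[μ] fun x => α x * u x :=
      stmt4_mulCLM_coeFn α hαmeas C hC0 hα_abs u
    have hsq : Integrable (fun x => u x * u x) μ := by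
      have := L2.integrable_inner (𝕜 := ℝ) u u
      simpa [RCLike.inner_apply, conj_trivial, pow_two] using this
    have hInt : Integrable (fun x => u x * (α x * u x)) μ := by
      refine Integrable.mono' (hsq.norm.const_mul C) ?_ ?_
      · exact (Lp.aestronglyMeasurable u).mul
          ((hαmeas.aestronglyMeasurable).mul (Lp.aestronglyMeasurable u))
      · filter_upwards [hα_abs] with x hx
        have : ‖u x * (α x * u x)‖ = |α x| * ‖u x * u x‖ := by
          simp only [Real.norm_eq_abs, abs_mul]; ring
        rw [this]
        exact mul_le_mul_of_nonneg_right hx (norm_nonneg _)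
    have h1 : ⟪u, Mα u⟫_ℝ = ∫ x, u x * (α x * u x) ∂μ := by
      rw [stmt4_inner_eq]
      exact integral_congr_ae (hcoe.mono fun x hx => by dsimp only; rw [hx])
    have h2 : (‖u‖:ℝ) ^ 2 = ∫ x, u x * u x ∂μ := by
      rw [← real_inner_self_eq_norm_sq, stmt4_inner_eq]
    rw [h1, h2, ← integral_const_mul]
    refine integral_mono_ae (hsq.const_mul αmin) hInt ?_
    filter_upwards [hbdd] with x hx
    have h0 : 0 ≤ u x * u x := mul_self_nonneg _
    nlinarith [hx.1]
  have key2 : ∀ w : Lp ℝ 2 μ, 0 ≤ ⟪Minv w, w⟫_ℝ := by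
    intro w
    rw [stmt4_inner_eq]
    refine integral_nonneg_of_ae ?_
    filter_upwards [stmt4_mulCLM_coeFn (fun x => (α x)⁻¹) hαmeas.inv _ hαinv0 hαinv_abs w, hbdd]
      with x h1 h2
    rw [h1]
    have hxpos : 0 < α x := lt_of_lt_of_le hαmin h2.1
    rw [mul_assoc]
    exact mul_nonneg (inv_nonneg.mpr hxpos.le) (mul_self_nonneg _)
  set Aop := Minv + N with hAopdef
  have hAcoer : ∀ w, c₀ * ‖w‖ ^ 2 ≤ ⟪Aop w, w⟫_ℝ := by
    intro w
    have h1 := key2 w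
    have h2 := hN w
    have h3 : ⟪Aop w, w⟫_ℝ = ⟪Minv w, w⟫_ℝ + ⟪N w, w⟫_ℝ := by
      rw [hAopdef]
      simp [ContinuousLinearMap.add_apply, inner_add_left]
    linarith
  have hAbij := stmt4_bijective_of_coercive Aop c₀ hc₀ hAcoer
  have hMαbij : Function.Bijective Mα :=
    Function.bijective_iff_has_inverse.mpr ⟨Minv, hMinvMα, hMαMinv⟩
  have hTform : ∀ u, Aop (Mα u) = u + N (M u) := by
    intro u
    rw [hMeq u, hAopdef]
    simp [ContinuousLinearMap.add_apply, hMinvMα u]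
  have hTbij : Function.Bijective (fun u : Lp ℝ 2 μ => u + N (M u)) := by
    have heq : (fun u : Lp ℝ 2 μ => u + N (M u)) = (⇑Aop ∘ ⇑Mα) := by
      funext u
      simp [Function.comp, hTform u]
    rw [heq]
    exact hAbij.comp hMαbij
  refine ⟨hTbij.existsUnique g, ?_⟩
  intro u hu
  by_cases hu0 : u = 0
  · have hM0 : M 0 = 0 := by rw [hMeq]; exact map_zero Mα
    have hg : g = 0 := by rw [← hu, hu0, hM0]; simp
    rw [hu0, hg]
    simp
  · have hμ : μ ≠ 0 := by
      intro h
      apply hu0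
      apply Lp.ext
      subst h
      rw [MeasureTheory.ae_zero]
      exact Filter.eventually_bot
    haveI : (ae μ).NeBot := ae_neBot.mpr hμ
    obtain ⟨x₀, hx1, hx2⟩ := hbdd.exists
    have hαle : αmin ≤ αmax := hx1.trans hx2
    have hαmax : 0 < αmax := lt_of_lt_of_le hαmin hαle
    have hCeq : C = αmax := max_eq_left hαmax.le
    set w := Mα u with hwdef
    have h1 : αmin * ‖u‖ ^ 2 ≤ ⟪u, w⟫_ℝ := key1 u
    have h2 : c₀ * ‖w‖ ^ 2 ≤ ⟪N w, w⟫_ℝ := hN w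
    have h3 : ⟪u, w⟫_ℝ + ⟪N w, w⟫_ℝ = ⟪g, w⟫_ℝ := by
      rw [← hu, hMeq u, inner_add_left]
    have h4 : ⟪g, w⟫_ℝ ≤ ‖g‖ * ‖w‖ := real_inner_le_norm _ _
    have h5 : ⟪u, w⟫_ℝ ≤ ‖u‖ * ‖w‖ := real_inner_le_norm _ _
    have h6 : ‖w‖ ≤ αmax * ‖u‖ := by
      have h := stmt4_mulCLM_norm_le α hαmeas C hC0 hα_abs u
      have h' : ‖w‖ ≤ C * ‖u‖ := h
      rw [hCeq] at h'
      exact h'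
    have hupos : 0 < ‖u‖ := norm_pos_iff.mpr hu0
    have hbound : αmin * ‖u‖ ^ 2 ≤ ‖u‖ * ‖w‖ := le_trans h1 h5
    have hgw : αmin * ‖u‖ ^ 2 + c₀ * ‖w‖ ^ 2 ≤ ‖g‖ * ‖w‖ := by linarith
    rw [div_mul_eq_mul_div, le_div_iff₀ (by positivity)]
    exact stmt4_final_bound αmin αmax c₀ ‖u‖ ‖w‖ ‖g‖ hαmin hc₀ hαle hupos hbound h6 hgw
end

section
/- Let H be a real Hilbert space with a Hilbert (orthonormal) basis (e_n)_{n ∈ ℕ}, and let T : H → H be a continuous linear operator with T e_n = λ_n e_n for real numbers λ_n. Let c ∈ ℝ, n₀ ∈ ℕ and δ > 0 be such that c ≠ λ_{n₀} and |c − λ_n| ≥ δ for all n ≠ n₀. If u, v ∈ H satisfy c·u − T u = v, then | ⟨u, v⟩ − ⟨v, e_{n₀}⟩² / (c − λ_{n₀}) | ≤ ‖v‖² / δ. -/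
open scoped InnerProductSpace

/-- Abstract spectral computation underlying Lemma 4.6 of the paper: if T is
diagonal in a Hilbert basis with eigenvalues λ_n and c•u − Tu = v, then ⟨u, v⟩
equals ⟨v, e_{n₀}⟩²/(c − λ_{n₀}) up to an error of size ‖v‖²/δ, provided c is
δ-separated from all λ_n with n ≠ n₀. -/
theorem stmt_5 {H : Type*} [NormedAddCommGroup H] [InnerProductSpace ℝ H]
    [CompleteSpace H]
    (b : HilbertBasis ℕ ℝ H) (T : H →L[ℝ] H) (lam : ℕ → ℝ)
    (hT : ∀ n, T (b n) = lam n • b n)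
    (c : ℝ) (n₀ : ℕ) (δ : ℝ) (hδ : 0 < δ)
    (hc : c ≠ lam n₀) (hsep : ∀ n, n ≠ n₀ → δ ≤ |c - lam n|)
    (u v : H) (huv : c • u - T u = v) :
    |⟪u, v⟫_ℝ - ⟪v, b n₀⟫_ℝ ^ 2 / (c - lam n₀)| ≤ ‖v‖ ^ 2 / δ := by
  classical
  have horth : ∀ i j : ℕ, ⟪b i, b j⟫_ℝ = if i = j then 1 else 0 :=
    orthonormal_iff_ite.mp b.orthonormal
  set a : ℕ → ℝ := fun n => ⟪b n, u⟫_ℝ with ha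
  have hTu : ∀ n, ⟪b n, T u⟫_ℝ = lam n * a n := by
    intro n
    have h2 := ((b.hasSum_repr u).mapL T).mapL (innerSL ℝ (b n))
    have h3 : HasSum (fun i => if i = n then lam n * a n else 0) ⟪b n, T u⟫_ℝ := by
      convert h2 using 2 with i
      case e'_3 => rfl
      case e'_6 => rfl
      simp only [map_smul, hT i, innerSL_apply_apply, inner_smul_right, smul_eq_mul,
        b.repr_apply_apply, horth n i]
      by_cases hi : i = n
      · subst hi; simp [ha]; ring
      · simp [hi, Ne.symm hi]
    exact h3.unique (hasSum_ite_eq n _)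
  have hv : ∀ n, ⟪b n, v⟫_ℝ = (c - lam n) * a n := by
    intro n
    have h4 : ⟪b n, c • u - T u⟫_ℝ = ⟪b n, v⟫_ℝ := by rw [huv]
    rw [inner_sub_right, inner_smul_right, hTu] at h4
    rw [← h4, ha]; ring
  have hvn : ∀ n, ⟪v, b n⟫_ℝ = (c - lam n) * a n :=
    fun n => (real_inner_comm (b n) v).trans (hv n)
  have hun : ∀ n, ⟪u, b n⟫_ℝ = a n := fun n => real_inner_comm (b n) u
  set f : ℕ → ℝ := fun n => (c - lam n) * a n ^ 2 with hf
  have hfsum : HasSum f ⟪u, v⟫_ℝ := by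
    convert b.hasSum_inner_mul_inner u v using 2 with n
    case e'_3 => rfl
    rw [hun n, hv n, hf]; ring
  have hn₀ : ⟪v, b n₀⟫_ℝ ^ 2 / (c - lam n₀) = f n₀ := by
    rw [hvn n₀, hf]
    have hne : c - lam n₀ ≠ 0 := sub_ne_zero.mpr hc
    field_simp
  set h : ℕ → ℝ := fun n => ((c - lam n) * a n) ^ 2 / δ with hh
  have hNsum : HasSum (fun n => ((c - lam n) * a n) ^ 2) (‖v‖ ^ 2) := by
    have h5 := b.hasSum_inner_mul_inner v v
    rw [real_inner_self_eq_norm_sq] at h5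
    convert h5 using 2 with n
    case e'_3 => rfl
    rw [hvn n, hv n]; ring
  have hhsum : HasSum h (‖v‖ ^ 2 / δ) := hNsum.div_const δ
  set g : ℕ → ℝ := fun n => if n = n₀ then 0 else f n with hg
  have hgle : ∀ n, |g n| ≤ h n := by
    intro n
    by_cases hn : n = n₀
    · simp only [hg, hn, if_pos, abs_zero, hh]
      positivity
    · simp only [hg, if_neg hn, hf, hh]
      have h1 : δ ≤ |c - lam n| := hsep n hn
      rw [abs_mul, abs_of_nonneg (sq_nonneg (a n)), le_div_iff₀ hδ]
      nlinarith [sq_abs (c - lam n), sq_nonneg (a n), abs_nonneg (c - lam n),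
        mul_le_mul_of_nonneg_left h1 (mul_nonneg (abs_nonneg (c - lam n)) (sq_nonneg (a n)))]
  have hgsum : Summable fun n => |g n| :=
    Summable.of_nonneg_of_le (fun n => abs_nonneg _) hgle hhsum.summable
  have key : ⟪u, v⟫_ℝ - f n₀ = ∑' n, g n := by
    have h2 := Summable.tsum_eq_add_tsum_ite hfsum.summable n₀
    rw [hfsum.tsum_eq] at h2
    rw [h2, hg]
    ring
  rw [hn₀, key]
  have habs : |∑' n, g n| ≤ ∑' n, |g n| := by
    have hgsum' : Summable fun n => ‖g n‖ := by
      simpa only [Real.norm_eq_abs] using hgsum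
    have := norm_tsum_le_tsum_norm hgsum'
    simpa only [Real.norm_eq_abs] using this
  calc |∑' n, g n| ≤ ∑' n, |g n| := habs
    _ ≤ ∑' n, h n := Summable.tsum_le_tsum hgle hgsum hhsum.summable
    _ = ‖v‖ ^ 2 / δ := hhsum.tsum_eq
end
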